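/- Let r be an odd prime, p a prime with p ≠ r, and q a prime with q ≡ 1 (mod r). Then the polynomial (X − 1)^p − q is irreducible over ℚ but reducible over the field ℚ_r of r-adic numbers. -/

import Mathlib

open Polynomial

lemma no_rat_pow_root (p q : ℕ) (hp : Nat.Prime p) (hq : Nat.Prime q) :
    ∀ b : ℚ, b ^ p ≠ (q : ℚ) := by
  intro b hb
  haveI : Fact (Nat.Prime q) := ⟨hq⟩
  have hb0 : b ≠ 0 := by
    intro h
    rw [h, zero_pow hp.ne_zero] at hb
    exact_mod_cast hq.ne_zero ((Nat.cast_eq_zero (R := ℚ)).mp hb.symm)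
  have h1 : padicValRat q (b ^ p) = p * padicValRat q b := padicValRat.pow b
  rw [hb] at h1
  have h2 : padicValRat q (q : ℚ) = 1 := by
    exact_mod_cast padicValRat.self hq.one_lt
  rw [h2] at h1
  have : (p : ℤ) ∣ 1 := ⟨padicValRat q b, h1⟩
  have := Int.eq_one_of_dvd_one (by positivity) this
  exact hp.one_lt.ne' (by exact_mod_cast this)

lemma shift_eq {K : Type*} [Field K] (p : ℕ) (c : K) :
    (Polynomial.algEquivAevalXAddC (-1 : K)) (X ^ p - C c)
      = (X - 1) ^ p - C c := by
  simp [Polynomial.algEquivAevalXAddC, map_sub, map_pow, sub_eq_add_neg]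

/-- Let `r` be an odd prime, `p` a prime with `p ≠ r`, and `q` a prime with
`q ≡ 1 (mod r)`. Then `(X − 1)^p − q` is irreducible over `ℚ` but reducible
over the field `ℚ_[r]` of `r`-adic numbers. -/
theorem stmt1 (r p q : ℕ) [Fact (Nat.Prime r)] (hrodd : Odd r)
    (hp : Nat.Prime p) (hpr : p ≠ r) (hq : Nat.Prime q)
    (hqr : q ≡ 1 [MOD r]) :
    Irreducible ((Polynomial.X - 1) ^ p - Polynomial.C (q : ℚ)) ∧
      ¬ Irreducible ((Polynomial.X - 1) ^ p - Polynomial.C (q : ℚ_[r])) := by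
  constructor
  · have hirr : Irreducible (X ^ p - C (q : ℚ)) :=
      X_pow_sub_C_irreducible_of_prime hp (no_rat_pow_root p q hp hq)
    rw [← shift_eq p (q : ℚ)]
    exact (MulEquiv.irreducible_iff (Polynomial.algEquivAevalXAddC (-1 : ℚ))).mpr hirr
  · -- find a root of X^p - q in ℤ_[r] via Hensel's lemma
    have hr := (Fact.out : Nat.Prime r)
    set F : Polynomial ℤ_[r] := X ^ p - C (q : ℤ_[r]) with hF
    have heval1 : F.eval 1 = 1 - (q : ℤ_[r]) := by simp [hF]
    have hderiv : F.derivative = C (p : ℤ_[r]) * X ^ (p - 1) := by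
      simp [hF, Polynomial.derivative_X_pow]
    have hderiv1 : F.derivative.eval 1 = (p : ℤ_[r]) := by simp [hderiv]
    have hnormp : ‖(p : ℤ_[r])‖ = 1 := by
      have hle : ‖(p : ℤ_[r])‖ ≤ 1 := (p : ℤ_[r]).2
      have : ¬ ‖((p : ℤ) : ℤ_[r])‖ < 1 := by
        rw [PadicInt.norm_int_lt_one_iff_dvd]
        intro hdvd
        have : r ∣ p := by exact_mod_cast hdvd
        exact hpr ((Nat.prime_dvd_prime_iff_eq hr hp).mp this).symm
      push_cast at this
      linarith [lt_or_eq_of_le hle |>.resolve_left this]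
    have hnormq : ‖F.eval 1‖ < 1 := by
      rw [heval1]
      have hdvd : (r : ℤ) ∣ (1 - (q : ℤ)) := hqr.dvd
      have : ‖((1 - (q : ℤ) : ℤ) : ℤ_[r])‖ < 1 :=
        (PadicInt.norm_int_lt_one_iff_dvd _).mpr hdvd
      push_cast at this
      exact this
    have hnorm : ‖F.eval 1‖ < ‖F.derivative.eval 1‖ ^ 2 := by
      rw [hderiv1, hnormp]; simpa using hnormq
    obtain ⟨z, hz, -⟩ := hensels_lemma hnorm
    have hzr : (z : ℚ_[r]) ^ p = (q : ℚ_[r]) := by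
      have : z ^ p - (q : ℤ_[r]) = 0 := by simpa [hF] using hz
      have h2 : z ^ p = (q : ℤ_[r]) := by linear_combination this
      exact_mod_cast congrArg (PadicInt.Coe.ringHom) h2
    -- hence (X-1)^p - C q has root z+1 and degree p ≥ 2, so not irreducible
    intro hirr
    set f : Polynomial ℚ_[r] := (X - 1) ^ p - C (q : ℚ_[r]) with hf
    have hroot : f.IsRoot ((z : ℚ_[r]) + 1) := by
      simp [hf, IsRoot, hzr]
    have hdvd : (X - C ((z : ℚ_[r]) + 1)) ∣ f := (dvd_iff_isRoot).mpr hroot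
    obtain ⟨g, hg⟩ := hdvd
    have hdeg : f.natDegree = p := by
      rw [hf]
      have h1 : ((X : Polynomial ℚ_[r]) - 1) = X - C 1 := by simp
      rw [natDegree_sub_C, h1, natDegree_pow, natDegree_X_sub_C, mul_one]
    rcases hirr.isUnit_or_isUnit hg with hu | hu
    · exact (Polynomial.not_isUnit_X_sub_C _) hu
    · have := Polynomial.natDegree_eq_zero_of_isUnit hu
      have h2 : f.natDegree = 1 := by
        rw [hg, natDegree_mul (X_sub_C_ne_zero _) (fun h => by simp [h] at hu),
          natDegree_X_sub_C, this]
      have := hp.two_le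
      omega
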